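/- Let φ = (√5 - 1)/2 and H(x) = -x·log x - (1-x)·log(1-x). For all x ∈ [φ, 1], φ·H(x²) ≥ x·H(x). -/

import Mathlib

open Real Set

noncomputable def gld : ℝ := (Real.sqrt 5 - 1) / 2
noncomputable def Hb (x : ℝ) : ℝ := -x * Real.log x - (1 - x) * Real.log (1 - x)
noncomputable def Db (x : ℝ) : ℝ := gld * Hb (x ^ 2) - x * Hb x
noncomputable def Db1 (x : ℝ) : ℝ :=
  (2 * gld * x + 1 - 2 * x) * Real.log (1 - x) + 2 * gld * x * Real.log (1 + x)
    + (2 - 4 * gld) * x * Real.log x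
noncomputable def Db2 (x : ℝ) : ℝ :=
  (2 * gld - 2) * Real.log (1 - x) + 2 * gld * Real.log (1 + x) + (2 - 4 * gld) * Real.log x
    + 1 / (1 - x) - 4 * gld / (1 - x ^ 2)

lemma sqrt5_sq : Real.sqrt 5 ^ 2 = 5 := Real.sq_sqrt (by norm_num)
lemma gld_sq : gld ^ 2 = 1 - gld := by
  have h := sqrt5_sq; unfold gld; nlinarith [Real.sqrt_nonneg 5]
lemma gld_lb : 0.618 < gld := by
  have h := sqrt5_sq; have h2 := Real.sqrt_nonneg 5
  unfold gld; nlinarith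
lemma gld_ub : gld < 0.61804 := by
  have h := sqrt5_sq; have h2 := Real.sqrt_nonneg 5
  unfold gld; nlinarith

lemma log_upper {t r : ℝ} (ht : 0 < t) (hr : 0 < r) : Real.log t ≤ Real.log r + (t - r) / r := by
  have h := Real.log_le_sub_one_of_pos (div_pos ht hr)
  rw [Real.log_div ht.ne' hr.ne'] at h
  have : (t - r) / r = t / r - 1 := by field_simp
  linarith
lemma log_lower {t r : ℝ} (ht : 0 < t) (hr : 0 < r) :
    Real.log r + (t - r) * (1 / t) ≤ Real.log t := by
  have h := Real.log_le_sub_one_of_pos (div_pos hr ht)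
  rw [Real.log_div hr.ne' ht.ne'] at h
  have : (t - r) * (1 / t) = 1 - r / t := by field_simp
  linarith

lemma hasDerivAt_Hb {t : ℝ} (h0 : 0 < t) (h1 : t < 1) :
    HasDerivAt Hb (Real.log (1 - t) - Real.log t) t := by
  have h1' : (0:ℝ) < 1 - t := by linarith
  have A : HasDerivAt (fun y : ℝ => y * Real.log y) (Real.log t + 1) t :=
    Real.hasDerivAt_mul_log h0.ne'
  have B0 : HasDerivAt (fun y : ℝ => 1 - y) (-1 : ℝ) t := by
    simpa using (hasDerivAt_id t).const_sub 1
  have B : HasDerivAt (fun y : ℝ => (1 - y) * Real.log (1 - y))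
      ((Real.log (1 - t) + 1) * (-1)) t :=
    (Real.hasDerivAt_mul_log h1'.ne').comp t B0
  have C := (A.neg).sub B
  have hfun : Hb = fun y : ℝ => -(y * Real.log y) - (1 - y) * Real.log (1 - y) := by
    funext y; unfold Hb; ring
  rw [hfun]
  refine C.congr_deriv ?_
  ring

lemma hasDerivAt_Db {x : ℝ} (h0 : 0 < x) (h1 : x < 1) : HasDerivAt Db (Db1 x) x := by
  have h1' : (0:ℝ) < 1 - x := by linarith
  have h2' : (0:ℝ) < 1 + x := by linarith
  have hx2a : (0:ℝ) < x ^ 2 := by positivity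
  have hx2b : x ^ 2 < 1 := by nlinarith
  have hsq : HasDerivAt (fun y : ℝ => y ^ 2) (2 * x) x := by
    simpa using hasDerivAt_pow 2 x
  have hH2 : HasDerivAt (Hb ∘ fun y : ℝ => y ^ 2)
      ((Real.log (1 - x ^ 2) - Real.log (x ^ 2)) * (2 * x)) x :=
    HasDerivAt.comp (h := fun y : ℝ => y ^ 2) (h₂ := Hb) x (hasDerivAt_Hb hx2a hx2b) hsq
  rw [Function.comp_def] at hH2
  have hxH : HasDerivAt (fun y : ℝ => y * Hb y)
      (1 * Hb x + x * (Real.log (1 - x) - Real.log x)) x :=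
    (hasDerivAt_id' x).mul (hasDerivAt_Hb h0 h1)
  have C := (hH2.const_mul gld).sub hxH
  have hfun : Db = fun y : ℝ => gld * Hb (y ^ 2) - y * Hb y := by funext y; rfl
  rw [hfun]
  refine C.congr_deriv ?_
  unfold Db1 Hb
  rw [show (1:ℝ) - x ^ 2 = (1 - x) * (1 + x) by ring,
    Real.log_mul h1'.ne' h2'.ne', Real.log_pow]
  push_cast
  ring

lemma hasDerivAt_Db1 {x : ℝ} (h0 : 0 < x) (h1 : x < 1) : HasDerivAt Db1 (Db2 x) x := by
  have h1' : (0:ℝ) < 1 - x := by linarith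
  have h2' : (0:ℝ) < 1 + x := by linarith
  have B0 : HasDerivAt (fun y : ℝ => 1 - y) (-1 : ℝ) x := by
    simpa using (hasDerivAt_id x).const_sub 1
  have B1 : HasDerivAt (fun y : ℝ => 1 + y) (1 : ℝ) x := by
    simpa using (hasDerivAt_id x).const_add 1
  have hlog1 : HasDerivAt (fun y : ℝ => Real.log (1 - y)) ((1 - x)⁻¹ * (-1)) x :=
    (Real.hasDerivAt_log h1'.ne').comp x B0
  have hlog2 : HasDerivAt (fun y : ℝ => Real.log (1 + y)) ((1 + x)⁻¹ * 1) x :=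
    (Real.hasDerivAt_log h2'.ne').comp x B1
  have hc1 : HasDerivAt (fun y : ℝ => 2 * gld * y + 1 - 2 * y) (2 * gld - 2) x := by
    have h := (((hasDerivAt_id x).const_mul (2 * gld)).add_const 1).sub
      ((hasDerivAt_id x).const_mul 2)
    refine h.congr_deriv ?_
    simp
  have T1 : HasDerivAt (fun y : ℝ => (2 * gld * y + 1 - 2 * y) * Real.log (1 - y))
      ((2 * gld - 2) * Real.log (1 - x) + (2 * gld * x + 1 - 2 * x) * ((1 - x)⁻¹ * (-1))) x :=
    hc1.mul hlog1
  have hc2 : HasDerivAt (fun y : ℝ => 2 * gld * y) (2 * gld) x := by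
    simpa using (hasDerivAt_id x).const_mul (2 * gld)
  have T2 : HasDerivAt (fun y : ℝ => 2 * gld * y * Real.log (1 + y))
      (2 * gld * Real.log (1 + x) + 2 * gld * x * ((1 + x)⁻¹ * 1)) x :=
    hc2.mul hlog2
  have T3 : HasDerivAt (fun y : ℝ => (2 - 4 * gld) * (y * Real.log y))
      ((2 - 4 * gld) * (Real.log x + 1)) x :=
    (Real.hasDerivAt_mul_log h0.ne').const_mul (2 - 4 * gld)
  have C := (T1.add T2).add T3
  have hfun : Db1 = fun y : ℝ => (2 * gld * y + 1 - 2 * y) * Real.log (1 - y)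
      + 2 * gld * y * Real.log (1 + y) + (2 - 4 * gld) * (y * Real.log y) := by
    funext y; unfold Db1; ring
  rw [hfun]
  refine C.congr_deriv ?_
  unfold Db2
  have e : (1:ℝ) - x ^ 2 = (1 - x) * (1 + x) := by ring
  rw [e]
  field_simp
  ring

lemma gld_pos : (0:ℝ) < gld := by have := gld_lb; norm_num at this ⊢; linarith
lemma Hb_one : Hb 1 = 0 := by simp [Hb]
lemma Db_one : Db 1 = 0 := by norm_num [Db, Hb_one]
lemma Hb_gld_sq : Hb (gld ^ 2) = Hb gld := by
  rw [gld_sq]; unfold Hb; rw [show (1:ℝ) - (1 - gld) = gld by ring]; ring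
lemma Db_gld : Db gld = 0 := by unfold Db; rw [Hb_gld_sq]; ring
lemma Db1_gld : Db1 gld = 0 := by
  have h1 : Real.log (1 - gld) = 2 * Real.log gld := by
    rw [← gld_sq, Real.log_pow]; push_cast; ring
  have hmul : gld * (1 + gld) = 1 := by
    have := gld_sq; nlinarith
  have h2 : Real.log (1 + gld) = -Real.log gld := by
    rw [show (1 + gld) = gld⁻¹ from eq_inv_of_mul_eq_one_right hmul, Real.log_inv]
  unfold Db1
  rw [h1, h2]
  linear_combination (-2 * Real.log gld) * gld_sq
lemma log033_ub : Real.log 0.33 ≤ -1.1086575 := by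
  have habs : |(-0.32 : ℝ)| = 0.32 := by rw [abs_of_neg] <;> norm_num
  have h := Real.abs_log_sub_add_sum_range_le (x := (-0.32 : ℝ)) (by rw [habs]; norm_num) 10
  rw [abs_le, habs] at h
  have hlog : Real.log (1 - (-0.32 : ℝ)) = Real.log 0.33 + 2 * Real.log 2 := by
    rw [show (1 : ℝ) - (-0.32) = 0.33 * 2 ^ 2 by norm_num,
      Real.log_mul (by norm_num) (by norm_num), Real.log_pow]
    push_cast; ring
  rw [hlog] at h
  norm_num [Finset.sum_range_succ] at h ⊢
  linarith [h.1, h.2, Real.log_two_gt_d9, Real.log_two_lt_d9]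

lemma log167_lb : 0.512823 ≤ Real.log 1.67 := by
  have habs : |(0.165 : ℝ)| = 0.165 := by rw [abs_of_pos] <;> norm_num
  have h := Real.abs_log_sub_add_sum_range_le (x := (0.165 : ℝ)) (by rw [habs]; norm_num) 7
  rw [abs_le, habs] at h
  have hlog : Real.log (1 - (0.165 : ℝ)) = Real.log 1.67 - Real.log 2 := by
    rw [show (1 : ℝ) - (0.165) = 1.67 / 2 by norm_num, Real.log_div (by norm_num) (by norm_num)]
  rw [hlog] at h
  norm_num [Finset.sum_range_succ] at h ⊢
  linarith [h.1, h.2, Real.log_two_gt_d9, Real.log_two_lt_d9]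

lemma log067_ub : Real.log 0.67 ≤ -0.4004693 := by
  have habs : |(0.33 : ℝ)| = 0.33 := by rw [abs_of_pos] <;> norm_num
  have h := Real.abs_log_sub_add_sum_range_le (x := (0.33 : ℝ)) (by rw [habs]; norm_num) 10
  rw [abs_le, habs] at h
  have hlog : Real.log (1 - (0.33 : ℝ)) = Real.log 0.67 := by norm_num
  rw [hlog] at h
  norm_num [Finset.sum_range_succ] at h ⊢
  linarith [h.1, h.2, Real.log_two_gt_d9, Real.log_two_lt_d9]

lemma log022_ub : Real.log 0.22 ≤ -1.5141272 := by
  have habs : |(0.12 : ℝ)| = 0.12 := by rw [abs_of_pos] <;> norm_num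
  have h := Real.abs_log_sub_add_sum_range_le (x := (0.12 : ℝ)) (by rw [habs]; norm_num) 6
  rw [abs_le, habs] at h
  have hlog : Real.log (1 - (0.12 : ℝ)) = Real.log 0.22 + 2 * Real.log 2 := by
    rw [show (1 : ℝ) - (0.12) = 0.22 * 2 ^ 2 by norm_num,
      Real.log_mul (by norm_num) (by norm_num), Real.log_pow]
    push_cast; ring
  rw [hlog] at h
  norm_num [Finset.sum_range_succ] at h ⊢
  linarith [h.1, h.2, Real.log_two_gt_d9, Real.log_two_lt_d9]

lemma log178_lb : 0.5766131 ≤ Real.log 1.78 := by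
  have habs : |(0.11 : ℝ)| = 0.11 := by rw [abs_of_pos] <;> norm_num
  have h := Real.abs_log_sub_add_sum_range_le (x := (0.11 : ℝ)) (by rw [habs]; norm_num) 6
  rw [abs_le, habs] at h
  have hlog : Real.log (1 - (0.11 : ℝ)) = Real.log 1.78 - Real.log 2 := by
    rw [show (1 : ℝ) - (0.11) = 1.78 / 2 by norm_num, Real.log_div (by norm_num) (by norm_num)]
  rw [hlog] at h
  norm_num [Finset.sum_range_succ] at h ⊢
  linarith [h.1, h.2, Real.log_two_gt_d9, Real.log_two_lt_d9]

lemma log078_ub : Real.log 0.78 ≤ -0.2484596 := by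
  have habs : |(0.22 : ℝ)| = 0.22 := by rw [abs_of_pos] <;> norm_num
  have h := Real.abs_log_sub_add_sum_range_le (x := (0.22 : ℝ)) (by rw [habs]; norm_num) 8
  rw [abs_le, habs] at h
  have hlog : Real.log (1 - (0.22 : ℝ)) = Real.log 0.78 := by norm_num
  rw [hlog] at h
  norm_num [Finset.sum_range_succ] at h ⊢
  linarith [h.1, h.2, Real.log_two_gt_d9, Real.log_two_lt_d9]

lemma log013_lb : -2.040221 ≤ Real.log 0.13 := by
  have habs : |(-0.04 : ℝ)| = 0.04 := by rw [abs_of_neg] <;> norm_num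
  have h := Real.abs_log_sub_add_sum_range_le (x := (-0.04 : ℝ)) (by rw [habs]; norm_num) 4
  rw [abs_le, habs] at h
  have hlog : Real.log (1 - (-0.04 : ℝ)) = Real.log 0.13 + 3 * Real.log 2 := by
    rw [show (1 : ℝ) - (-0.04) = 0.13 * 2 ^ 3 by norm_num,
      Real.log_mul (by norm_num) (by norm_num), Real.log_pow]
    push_cast; ring
  rw [hlog] at h
  norm_num [Finset.sum_range_succ] at h ⊢
  linarith [h.1, h.2, Real.log_two_gt_d9, Real.log_two_lt_d9]

lemma log187_lb : 0.6259383 ≤ Real.log 1.87 := by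
  have habs : |(0.065 : ℝ)| = 0.065 := by rw [abs_of_pos] <;> norm_num
  have h := Real.abs_log_sub_add_sum_range_le (x := (0.065 : ℝ)) (by rw [habs]; norm_num) 5
  rw [abs_le, habs] at h
  have hlog : Real.log (1 - (0.065 : ℝ)) = Real.log 1.87 - Real.log 2 := by
    rw [show (1 : ℝ) - (0.065) = 1.87 / 2 by norm_num, Real.log_div (by norm_num) (by norm_num)]
  rw [hlog] at h
  norm_num [Finset.sum_range_succ] at h ⊢
  linarith [h.1, h.2, Real.log_two_gt_d9, Real.log_two_lt_d9]

lemma log087_ub : Real.log 0.87 ≤ -0.1392612 := by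
  have habs : |(0.13 : ℝ)| = 0.13 := by rw [abs_of_pos] <;> norm_num
  have h := Real.abs_log_sub_add_sum_range_le (x := (0.13 : ℝ)) (by rw [habs]; norm_num) 6
  rw [abs_le, habs] at h
  have hlog : Real.log (1 - (0.13 : ℝ)) = Real.log 0.87 := by norm_num
  rw [hlog] at h
  norm_num [Finset.sum_range_succ] at h ⊢
  linarith [h.1, h.2, Real.log_two_gt_d9, Real.log_two_lt_d9]

lemma log006_lb : -2.8134109 ≤ Real.log 0.06 := by
  have habs : |(0.04 : ℝ)| = 0.04 := by rw [abs_of_pos] <;> norm_num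
  have h := Real.abs_log_sub_add_sum_range_le (x := (0.04 : ℝ)) (by rw [habs]; norm_num) 4
  rw [abs_le, habs] at h
  have hlog : Real.log (1 - (0.04 : ℝ)) = Real.log 0.06 + 4 * Real.log 2 := by
    rw [show (1 : ℝ) - (0.04) = 0.06 * 2 ^ 4 by norm_num,
      Real.log_mul (by norm_num) (by norm_num), Real.log_pow]
    push_cast; ring
  rw [hlog] at h
  norm_num [Finset.sum_range_succ] at h ⊢
  linarith [h.1, h.2, Real.log_two_gt_d9, Real.log_two_lt_d9]

lemma log194_ub : Real.log 1.94 ≤ 0.6626881 := by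
  have habs : |(0.03 : ℝ)| = 0.03 := by rw [abs_of_pos] <;> norm_num
  have h := Real.abs_log_sub_add_sum_range_le (x := (0.03 : ℝ)) (by rw [habs]; norm_num) 4
  rw [abs_le, habs] at h
  have hlog : Real.log (1 - (0.03 : ℝ)) = Real.log 1.94 - Real.log 2 := by
    rw [show (1 : ℝ) - (0.03) = 1.94 / 2 by norm_num, Real.log_div (by norm_num) (by norm_num)]
  rw [hlog] at h
  norm_num [Finset.sum_range_succ] at h ⊢
  linarith [h.1, h.2, Real.log_two_gt_d9, Real.log_two_lt_d9]

lemma log094_lb : -0.0618761 ≤ Real.log 0.94 := by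
  have habs : |(0.06 : ℝ)| = 0.06 := by rw [abs_of_pos] <;> norm_num
  have h := Real.abs_log_sub_add_sum_range_le (x := (0.06 : ℝ)) (by rw [habs]; norm_num) 4
  rw [abs_le, habs] at h
  have hlog : Real.log (1 - (0.06 : ℝ)) = Real.log 0.94 := by norm_num
  rw [hlog] at h
  norm_num [Finset.sum_range_succ] at h ⊢
  linarith [h.1, h.2, Real.log_two_gt_d9, Real.log_two_lt_d9]
lemma regA1 {x : ℝ} (ha : 0.618 ≤ x) (hb : x ≤ 0.72) : 0 ≤ Db2 x := by
  have h0 : (0:ℝ) < x := by linarith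
  have h1 : (0:ℝ) < 1 - x := by linarith
  have h2 : (0:ℝ) < 1 + x := by linarith
  have hgl := gld_lb; have hgu := gld_ub
  have m1 : (2*gld-2) * (-1.1086575 + ((1-x) - 0.33)/0.33) ≤ (2*gld-2) * Real.log (1-x) := by
    have hb1 : Real.log (1-x) ≤ -1.1086575 + ((1-x) - 0.33)/0.33 := by
      linarith [log_upper h1 (show (0:ℝ) < 0.33 by norm_num), log033_ub]
    exact mul_le_mul_of_nonpos_left hb1 (by linarith)
  have m2 : 2*gld * (0.512823 + ((1+x) - 1.67) * (1/(1+x))) ≤ 2*gld * Real.log (1+x) := by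
    have hb2 : 0.512823 + ((1+x) - 1.67) * (1/(1+x)) ≤ Real.log (1+x) := by
      linarith [log_lower h2 (show (0:ℝ) < 1.67 by norm_num), log167_lb]
    exact mul_le_mul_of_nonneg_left hb2 (by linarith)
  have m3 : (2-4*gld) * (-0.4004693 + (x - 0.67)/0.67) ≤ (2-4*gld) * Real.log x := by
    have hb3 : Real.log x ≤ -0.4004693 + (x - 0.67)/0.67 := by
      linarith [log_upper h0 (show (0:ℝ) < 0.67 by norm_num), log067_ub]
    exact mul_le_mul_of_nonpos_left hb3 (by linarith)
  have key : 0 ≤ (2*gld-2) * (-1.1086575 + ((1-x) - 0.33)/0.33)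
      + 2*gld * (0.512823 + ((1+x) - 1.67) * (1/(1+x)))
      + (2-4*gld) * (-0.4004693 + (x - 0.67)/0.67)
      + 1/(1-x) - 4*gld/(1 - x^2) := by
    have e : (2*gld-2) * (-1.1086575 + ((1-x) - 0.33)/0.33)
      + 2*gld * (0.512823 + ((1+x) - 1.67) * (1/(1+x)))
      + (2-4*gld) * (-0.4004693 + (x - 0.67)/0.67)
      + 1/(1-x) - 4*gld/(1 - x^2)
      = ((-300648947/82500000) + (516584353/165000000) * gld + (22211/2211) * x + (-960763/110550) * x * gld + (383148947/82500000) * x^2 + (-1727684353/165000000) * x^2 * gld + (-20000/2211) * x^3 + (26600/2211) * x^3 * gld) / ((1-x)*(1+x)) := by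
      rw [show (1:ℝ) - x^2 = (1-x)*(1+x) by ring]
      field_simp
      ring
    rw [e]
    apply div_nonneg _ (by positivity)
    nlinarith [mul_nonneg (sub_nonneg.mpr ha) (sub_nonneg.mpr hb), hgl, hgu,
      mul_nonneg (mul_nonneg (sub_nonneg.mpr ha) (sub_nonneg.mpr hb)) (by linarith : (0:ℝ) ≤ gld - 0.618),
      mul_nonneg (mul_nonneg (sub_nonneg.mpr ha) (sub_nonneg.mpr hb)) (by linarith : (0:ℝ) ≤ 0.61804 - gld),
      sq_nonneg (x - 0.67)]
  unfold Db2
  linarith [m1, m2, m3, key]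

lemma regA2 {x : ℝ} (ha : 0.72 ≤ x) (hb : x ≤ 0.84) : 0 ≤ Db2 x := by
  have h0 : (0:ℝ) < x := by linarith
  have h1 : (0:ℝ) < 1 - x := by linarith
  have h2 : (0:ℝ) < 1 + x := by linarith
  have hgl := gld_lb; have hgu := gld_ub
  have m1 : (2*gld-2) * (-1.5141272 + ((1-x) - 0.22)/0.22) ≤ (2*gld-2) * Real.log (1-x) := by
    have hb1 : Real.log (1-x) ≤ -1.5141272 + ((1-x) - 0.22)/0.22 := by
      linarith [log_upper h1 (show (0:ℝ) < 0.22 by norm_num), log022_ub]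
    exact mul_le_mul_of_nonpos_left hb1 (by linarith)
  have m2 : 2*gld * (0.5766131 + ((1+x) - 1.78) * (1/(1+x))) ≤ 2*gld * Real.log (1+x) := by
    have hb2 : 0.5766131 + ((1+x) - 1.78) * (1/(1+x)) ≤ Real.log (1+x) := by
      linarith [log_lower h2 (show (0:ℝ) < 1.78 by norm_num), log178_lb]
    exact mul_le_mul_of_nonneg_left hb2 (by linarith)
  have m3 : (2-4*gld) * (-0.2484596 + (x - 0.78)/0.78) ≤ (2-4*gld) * Real.log x := by
    have hb3 : Real.log x ≤ -0.2484596 + (x - 0.78)/0.78 := by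
      linarith [log_upper h0 (show (0:ℝ) < 0.78 by norm_num), log078_ub]
    exact mul_le_mul_of_nonpos_left hb3 (by linarith)
  have key : 0 ≤ (2*gld-2) * (-1.5141272 + ((1-x) - 0.22)/0.22)
      + 2*gld * (0.5766131 + ((1+x) - 1.78) * (1/(1+x)))
      + (2-4*gld) * (-0.2484596 + (x - 0.78)/0.78)
      + 1/(1-x) - 4*gld/(1 - x^2) := by
    have e : (2*gld-2) * (-1.5141272 + ((1-x) - 0.22)/0.22)
      + 2*gld * (0.5766131 + ((1+x) - 1.78) * (1/(1+x)))
      + (2-4*gld) * (-0.2484596 + (x - 0.78)/0.78)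
      + 1/(1-x) - 4*gld/(1 - x^2)
      = ((-76444141/13750000) + (255734561/55000000) * gld + (5429/429) * x + (-114319/10725) * x * gld + (90194141/13750000) * x^2 + (-671534561/55000000) * x^2 * gld + (-5000/429) * x^3 + (6100/429) * x^3 * gld) / ((1-x)*(1+x)) := by
      rw [show (1:ℝ) - x^2 = (1-x)*(1+x) by ring]
      field_simp
      ring
    rw [e]
    apply div_nonneg _ (by positivity)
    nlinarith [mul_nonneg (sub_nonneg.mpr ha) (sub_nonneg.mpr hb), hgl, hgu,
      mul_nonneg (mul_nonneg (sub_nonneg.mpr ha) (sub_nonneg.mpr hb)) (by linarith : (0:ℝ) ≤ gld - 0.618),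
      mul_nonneg (mul_nonneg (sub_nonneg.mpr ha) (sub_nonneg.mpr hb)) (by linarith : (0:ℝ) ≤ 0.61804 - gld),
      sq_nonneg (x - 0.78)]
  unfold Db2
  linarith [m1, m2, m3, key]

set_option maxHeartbeats 2000000 in
lemma regB {x : ℝ} (ha : 0.84 ≤ x) (hb : x ≤ 0.9) : 0 ≤ Db1 x := by
  have h0 : (0:ℝ) < x := by linarith
  have h1 : (0:ℝ) < 1 - x := by linarith
  have h2 : (0:ℝ) < 1 + x := by linarith
  have hgl := gld_lb; have hgu := gld_ub
  have m1 : (2*gld*x+1-2*x) * (-2.040221 + ((1-x) - 0.13) * (1/(1-x))) ≤ (2*gld*x+1-2*x) * Real.log (1-x) := by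
    have hb1 : -2.040221 + ((1-x) - 0.13) * (1/(1-x)) ≤ Real.log (1-x) := by
      linarith [log_lower h1 (show (0:ℝ) < 0.13 by norm_num), log013_lb]
    exact mul_le_mul_of_nonneg_left hb1 (by nlinarith)
  have m2 : 2*gld*x * (0.6259383 + ((1+x) - 1.87) * (1/(1+x))) ≤ 2*gld*x * Real.log (1+x) := by
    have hb2 : 0.6259383 + ((1+x) - 1.87) * (1/(1+x)) ≤ Real.log (1+x) := by
      linarith [log_lower h2 (show (0:ℝ) < 1.87 by norm_num), log187_lb]
    exact mul_le_mul_of_nonneg_left hb2 (by nlinarith)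
  have m3 : (2-4*gld)*x * (-0.1392612 + (x - 0.87)/0.87) ≤ (2-4*gld)*x * Real.log x := by
    have hb3 : Real.log x ≤ -0.1392612 + (x - 0.87)/0.87 := by
      linarith [log_upper h0 (show (0:ℝ) < 0.87 by norm_num), log087_ub]
    exact mul_le_mul_of_nonpos_left hb3 (by nlinarith)
  have key : 0 ≤ (2*gld*x+1-2*x) * (-2.040221 + ((1-x) - 0.13) * (1/(1-x)))
      + 2*gld*x * (0.6259383 + ((1+x) - 1.87) * (1/(1+x)))
      + (2-4*gld)*x * (-0.1392612 + (x - 0.87)/0.87) := by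
    have e : (2*gld*x+1-2*x) * (-2.040221 + ((1-x) - 0.13) * (1/(1-x)))
      + 2*gld*x * (0.6259383 + ((1+x) - 1.87) * (1/(1+x)))
      + (2-4*gld)*x * (-0.1392612 + (x - 0.87)/0.87)
      = ((-1170221/1000000) + (-170201/2500000) * x + (8642397/5000000) * x * gld + (313119227/87000000) * x^2 + (-2431/2175) * x^2 * gld + (495201/2500000) * x^3 + (-28642397/5000000) * x^3 * gld + (-200/87) * x^4 + (400/87) * x^4 * gld) / ((1-x)*(1+x)) := by
      field_simp
      ring
    rw [e]
    apply div_nonneg _ (by positivity)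
    have s1 : (0:ℝ) ≤ x - 0.84 := by linarith
    have s2 : (0:ℝ) ≤ 0.9 - x := by linarith
    have t1 : (0:ℝ) ≤ gld - 0.618 := by linarith
    have t2 : (0:ℝ) ≤ 0.61804 - gld := by linarith
    nlinarith [mul_nonneg s1 s2, mul_nonneg s2 t2, mul_nonneg s2 t1, mul_nonneg s1 t1,
      mul_nonneg s1 t2, mul_nonneg (mul_nonneg s1 s2) s2, mul_nonneg (mul_nonneg s1 s2) s1,
      mul_nonneg (mul_nonneg s2 s2) t2, mul_nonneg (mul_nonneg s1 s1) t2,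
      mul_nonneg (mul_nonneg s1 s2) t2, mul_nonneg (mul_nonneg s1 s2) t1,
      mul_nonneg (mul_nonneg (mul_nonneg s1 s2) s2) t1,
      mul_nonneg (mul_nonneg (mul_nonneg s1 s2) s1) t1,
      sq_nonneg (x - 0.88)]
  unfold Db1
  linarith [m1, m2, m3, key]



lemma regC {x : ℝ} (ha : 0.9 ≤ x) (hb : x ≤ 63/64) : Db2 x ≤ 0 := by
  have h0 : (0:ℝ) < x := by linarith
  have h1 : (0:ℝ) < 1 - x := by linarith
  have h2 : (0:ℝ) < 1 + x := by linarith
  have hgl := gld_lb; have hgu := gld_ub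
  have m1 : (2*gld-2) * Real.log (1-x) ≤ (2*gld-2) * (-2.8134109 + ((1-x) - 0.06) * (1/(1-x))) := by
    have hb1 : -2.8134109 + ((1-x) - 0.06) * (1/(1-x)) ≤ Real.log (1-x) := by
      linarith [log_lower h1 (show (0:ℝ) < 0.06 by norm_num), log006_lb]
    exact mul_le_mul_of_nonpos_left hb1 (by linarith)
  have m2 : 2*gld * Real.log (1+x) ≤ 2*gld * (0.6626881 + ((1+x) - 1.94)/1.94) := by
    have hb2 : Real.log (1+x) ≤ 0.6626881 + ((1+x) - 1.94)/1.94 := by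
      linarith [log_upper h2 (show (0:ℝ) < 1.94 by norm_num), log194_ub]
    exact mul_le_mul_of_nonneg_left hb2 (by linarith)
  have m3 : (2-4*gld) * Real.log x ≤ (2-4*gld) * (-0.0618761 + (x - 0.94) * (1/x)) := by
    have hb3 : -0.0618761 + (x - 0.94) * (1/x) ≤ Real.log x := by
      linarith [log_lower h0 (show (0:ℝ) < 0.94 by norm_num), log094_lb]
    exact mul_le_mul_of_nonpos_left hb3 (by linarith)
  have key : (2*gld-2) * (-2.8134109 + ((1-x) - 0.06) * (1/(1-x)))
      + 2*gld * (0.6626881 + ((1+x) - 1.94)/1.94)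
      + (2-4*gld) * (-0.0618761 + (x - 0.94) * (1/x))
      + 1/(1-x) - 4*gld/(1 - x^2) ≤ 0 := by
    rw [← neg_nonneg]
    have e : -((2*gld-2) * (-2.8134109 + ((1-x) - 0.06) * (1/(1-x)))
      + 2*gld * (0.6626881 + ((1+x) - 1.94)/1.94)
      + (2-4*gld) * (-0.0618761 + (x - 0.94) * (1/x))
      + 1/(1-x) - 4*gld/(1 - x^2))
      = ((47/25) + (-94/25) * gld + (-8278837/1250000) * x + (2702180741/242500000) * x * gld + (-3) * x^2 + (6909/2425) * x^2 * gld + (6878837/1250000) * x^3 + (-1703080741/242500000) * x^3 * gld + (100/97) * x^4 * gld) / (x*(1-x)*(1+x)) := by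
      rw [show (1:ℝ) - x^2 = (1-x)*(1+x) by ring]
      field_simp
      ring
    rw [e]
    apply div_nonneg _ (by positivity)
    nlinarith [mul_nonneg (sub_nonneg.mpr ha) (sub_nonneg.mpr hb), hgl, hgu,
      mul_nonneg (mul_nonneg (sub_nonneg.mpr ha) (sub_nonneg.mpr hb)) (by linarith : (0:ℝ) ≤ gld - 0.618),
      mul_nonneg (mul_nonneg (sub_nonneg.mpr ha) (sub_nonneg.mpr hb)) (by linarith : (0:ℝ) ≤ 0.61804 - gld),
      sq_nonneg (x - 0.94)]
  unfold Db2
  linarith [m1, m2, m3, key]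

lemma Db_ident {x : ℝ} (h0 : 0 < x) (h1 : x < 1) :
    Db x = (2*gld-1) * x^2 * (-Real.log x)
      + gld * (1-x) * ((1 - gld*x) * (-Real.log (1-x)) - (1+x) * Real.log (1+x)) := by
  have h1' : (0:ℝ) < 1 - x := by linarith
  have h2' : (0:ℝ) < 1 + x := by linarith
  unfold Db Hb
  rw [show (1:ℝ) - x^2 = (1-x)*(1+x) by ring, Real.log_mul h1'.ne' h2'.ne', Real.log_pow]
  push_cast
  linear_combination (-(x * (1-x) * Real.log (1-x))) * gld_sq

lemma regD {x : ℝ} (ha : 63/64 ≤ x) (hb : x ≤ 1) : 0 ≤ Db x := by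
  rcases eq_or_lt_of_le hb with h | h
  · rw [h, Db_one]
  have h0 : (0:ℝ) < x := by linarith
  have h1' : (0:ℝ) < 1 - x := by linarith
  have hgl := gld_lb; have hgu := gld_ub
  rw [Db_ident h0 h]
  have hlogx : Real.log x ≤ 0 := Real.log_nonpos h0.le (by linarith)
  have hA : 0 ≤ (2*gld-1) * x^2 * (-Real.log x) :=
    mul_nonneg (mul_nonneg (by linarith) (sq_nonneg x)) (by linarith)
  have e2 : (4.1588830818:ℝ) ≤ -Real.log (1-x) := by
    have h164 : Real.log (1-x) ≤ Real.log (1/64) :=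
      (Real.log_le_log_iff h1' (by norm_num)).mpr (by linarith)
    have h64 : Real.log ((1:ℝ)/64) = -(6*Real.log 2) := by
      rw [one_div, Real.log_inv, show (64:ℝ) = 2^6 by norm_num, Real.log_pow]
      push_cast; ring
    rw [h64] at h164
    linarith [Real.log_two_gt_d9]
  have e1 : (0.38196:ℝ) ≤ 1 - gld*x := by
    have : gld*x ≤ gld := by nlinarith [gld_pos]
    linarith
  have e3 : Real.log (1+x) ≤ 0.6931471808 := by
    have : Real.log (1+x) ≤ Real.log 2 :=
      (Real.log_le_log_iff (by linarith) (by norm_num)).mpr (by linarith)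
    linarith [Real.log_two_lt_d9]
  have e4 : 0 ≤ Real.log (1+x) := Real.log_nonneg (by linarith)
  have p1 : (0.38196:ℝ) * 4.1588830818 ≤ (1 - gld*x) * (-Real.log (1-x)) :=
    mul_le_mul e1 e2 (by norm_num) (by linarith)
  have p2 : (1+x) * Real.log (1+x) ≤ 2 * 0.6931471808 :=
    mul_le_mul (by linarith) e3 e4 (by norm_num)
  have hB : 0 ≤ (1 - gld*x) * (-Real.log (1-x)) - (1+x) * Real.log (1+x) := by
    nlinarith
  have := mul_nonneg (mul_nonneg gld_pos.le h1'.le) hB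
  linarith

lemma regA {x : ℝ} (ha : 0.618 ≤ x) (hb : x ≤ 0.84) : 0 ≤ Db2 x := by
  rcases le_total x 0.72 with h | h
  · exact regA1 ha h
  · exact regA2 h (by norm_num at hb ⊢; linarith)

lemma gld_le84 : gld ≤ (0.84:ℝ) := by linarith [gld_ub]

lemma DbA : ∀ y ∈ Icc gld (0.84:ℝ), 0 ≤ Db y := by
  have hgl := gld_lb; have hgu := gld_ub
  have hmem : ∀ y ∈ Icc gld (0.84:ℝ), 0 < y ∧ y < 1 := by
    intro y hy; exact ⟨by linarith [hy.1], by linarith [hy.2]⟩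
  have h1 : MonotoneOn Db1 (Icc gld (0.84:ℝ)) := by
    apply monotoneOn_of_hasDerivWithinAt_nonneg (convex_Icc _ _) (f' := Db2)
    · intro y hy
      exact (hasDerivAt_Db1 (hmem y hy).1 (hmem y hy).2).continuousAt.continuousWithinAt
    · intro y hy; rw [interior_Icc] at hy
      exact (hasDerivAt_Db1 (by linarith [hy.1] : (0:ℝ) < y)
        (by linarith [hy.2] : y < 1)).hasDerivWithinAt
    · intro y hy; rw [interior_Icc] at hy
      exact regA (by linarith [hy.1]) (le_of_lt hy.2)
  have hDb1 : ∀ y ∈ Icc gld (0.84:ℝ), 0 ≤ Db1 y := by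
    intro y hy
    have h0 := h1 (left_mem_Icc.mpr gld_le84) hy hy.1
    rw [Db1_gld] at h0; exact h0
  have h2 : MonotoneOn Db (Icc gld (0.84:ℝ)) := by
    apply monotoneOn_of_hasDerivWithinAt_nonneg (convex_Icc _ _) (f' := Db1)
    · intro y hy
      exact (hasDerivAt_Db (hmem y hy).1 (hmem y hy).2).continuousAt.continuousWithinAt
    · intro y hy; rw [interior_Icc] at hy
      exact (hasDerivAt_Db (by linarith [hy.1] : (0:ℝ) < y)
        (by linarith [hy.2] : y < 1)).hasDerivWithinAt
    · intro y hy; rw [interior_Icc] at hy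
      exact hDb1 y ⟨le_of_lt hy.1, le_of_lt hy.2⟩
  intro y hy
  have h0 := h2 (left_mem_Icc.mpr gld_le84) hy hy.1
  rw [Db_gld] at h0; exact h0

lemma DbB : ∀ y ∈ Icc (0.84:ℝ) (0.9:ℝ), 0 ≤ Db y := by
  have h2 : MonotoneOn Db (Icc (0.84:ℝ) (0.9:ℝ)) := by
    apply monotoneOn_of_hasDerivWithinAt_nonneg (convex_Icc _ _) (f' := Db1)
    · intro y hy
      exact (hasDerivAt_Db (by norm_num at hy ⊢; linarith [hy.1] : (0:ℝ) < y)
        (by norm_num at hy ⊢; linarith [hy.2] : y < 1)).continuousAt.continuousWithinAt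
    · intro y hy; rw [interior_Icc] at hy
      exact (hasDerivAt_Db (by norm_num at hy ⊢; linarith [hy.1] : (0:ℝ) < y)
        (by norm_num at hy ⊢; linarith [hy.2] : y < 1)).hasDerivWithinAt
    · intro y hy; rw [interior_Icc] at hy
      exact regB (le_of_lt hy.1) (le_of_lt hy.2)
  intro y hy
  have h0 := h2 (left_mem_Icc.mpr (by norm_num)) hy hy.1
  have h84 : 0 ≤ Db 0.84 := DbA 0.84 ⟨gld_le84, le_refl _⟩
  linarith

lemma DbC : ∀ y ∈ Icc (0.9:ℝ) ((63:ℝ)/64), 0 ≤ Db y := by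
  have hconc : ConcaveOn ℝ (Icc (0.9:ℝ) ((63:ℝ)/64)) Db := by
    apply concaveOn_of_hasDerivWithinAt2_nonpos (convex_Icc _ _) (f' := Db1) (f'' := Db2)
    · intro y hy
      exact (hasDerivAt_Db (by norm_num at hy ⊢; linarith [hy.1] : (0:ℝ) < y)
        (by norm_num at hy ⊢; linarith [hy.2] : y < 1)).continuousAt.continuousWithinAt
    · intro y hy; rw [interior_Icc] at hy
      exact (hasDerivAt_Db (by norm_num at hy ⊢; linarith [hy.1] : (0:ℝ) < y)
        (by norm_num at hy ⊢; linarith [hy.2] : y < 1)).hasDerivWithinAt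
    · intro y hy; rw [interior_Icc] at hy
      exact (hasDerivAt_Db1 (by norm_num at hy ⊢; linarith [hy.1] : (0:ℝ) < y)
        (by norm_num at hy ⊢; linarith [hy.2] : y < 1)).hasDerivWithinAt
    · intro y hy; rw [interior_Icc] at hy
      exact regC (le_of_lt hy.1) (le_of_lt hy.2)
  intro y hy
  obtain ⟨hy1, hy2⟩ := hy
  have hd : ((63:ℝ)/64 - 0.9) > 0 := by norm_num
  set t := ((63:ℝ)/64 - y) / ((63:ℝ)/64 - 0.9) with ht
  have ht0 : 0 ≤ t := div_nonneg (by linarith) hd.le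
  have ht1 : t ≤ 1 := by
    rw [ht, div_le_one hd]; linarith
  have hyt : t * 0.9 + (1 - t) * ((63:ℝ)/64) = y := by
    field_simp [ht]; ring
  have h09 : 0 ≤ Db 0.9 := DbB 0.9 ⟨by norm_num, le_refl _⟩
  have h63 : 0 ≤ Db ((63:ℝ)/64) := regD (le_refl _) (by norm_num)
  have hcomb := hconc.2 (show (0.9:ℝ) ∈ Icc (0.9:ℝ) ((63:ℝ)/64) by
      constructor <;> norm_num)
    (show ((63:ℝ)/64) ∈ Icc (0.9:ℝ) ((63:ℝ)/64) by constructor <;> norm_num)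
    ht0 (by linarith : 0 ≤ 1 - t) (by ring : t + (1 - t) = 1)
  simp only [smul_eq_mul] at hcomb
  rw [hyt] at hcomb
  nlinarith [mul_nonneg ht0 h09, mul_nonneg (by linarith : (0:ℝ) ≤ 1 - t) h63]

theorem stmt1
    (φ : ℝ) (hφ : φ = (Real.sqrt 5 - 1) / 2)
    (H : ℝ → ℝ) (hH : ∀ x, H x = -x * Real.log x - (1 - x) * Real.log (1 - x)) :
    ∀ x ∈ Set.Icc φ 1, φ * H (x ^ 2) ≥ x * H x := by
  intro x hx
  obtain ⟨hx1, hx2⟩ := hx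
  have hgx : gld ≤ x := by rw [hφ] at hx1; exact hx1
  have hgl := gld_lb; have hgu := gld_ub
  have hDb : 0 ≤ Db x := by
    rcases le_total x 0.84 with h | h
    · exact DbA x ⟨hgx, h⟩
    · rcases le_total x 0.9 with h' | h'
      · exact DbB x ⟨h, h'⟩
      · rcases le_total x ((63:ℝ)/64) with h'' | h''
        · exact DbC x ⟨h', h''⟩
        · exact regD h'' hx2
  have he : gld * H (x^2) - x * H x = Db x := by
    rw [hH, hH]; unfold Db Hb; ring
  rw [hφ] at *
  have : gld = (Real.sqrt 5 - 1)/2 := rfl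
  rw [← this]
  linarith
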